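/- For the edge-labeling λ(a,b) = (j, a_j) of the m-Tamari lattice T_n^(m) (with j the least index where a and b differ, and labels ordered by (i,x) ≤ (j,y) iff i < j or (i = j and x ≥ y)), every interval of T_n^(m) contains at most one falling maximal chain. -/

import Mathlib

open scoped Classical

/-- An `m`-Dyck sequence of height `n` (0-indexed): weakly increasing with `a i ≤ m * i`. -/
def IsDyck (m n : ℕ) (a : Fin n → ℕ) : Prop :=
  Monotone a ∧ ∀ i : Fin n, a i ≤ m * i.val

/-- `k` is the last index of the primitive subsequence of `a` at position `i`. -/
def IsPrimEnd (m n : ℕ) (a : Fin n → ℕ) (i k : Fin n) : Prop :=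
  i ≤ k ∧ (∀ j : Fin n, i < j → j ≤ k → a j - a i < m * (j.val - i.val)) ∧
    (k.val + 1 = n ∨ ∃ h : k.val + 1 < n, m * (k.val + 1 - i.val) ≤ a ⟨k.val + 1, h⟩ - a i)

/-- The covering relation of the `m`-Tamari lattice: decrease the primitive
subsequence at a position `i+1` with `a i < a (i+1)` by one. -/
def Covers (m n : ℕ) (a b : Fin n → ℕ) : Prop :=
  ∃ (i : ℕ) (h : i + 1 < n) (k : Fin n),
    a ⟨i, Nat.lt_of_succ_lt h⟩ < a ⟨i + 1, h⟩ ∧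
    IsPrimEnd m n a ⟨i + 1, h⟩ k ∧
    b = fun j => if (⟨i + 1, h⟩ : Fin n) ≤ j ∧ j ≤ k then a j - 1 else a j

/-- The order of the `m`-Tamari lattice: reflexive-transitive closure of `Covers`. -/
def TamariLE (m n : ℕ) (a b : Fin n → ℕ) : Prop :=
  Relation.ReflTransGen (Covers m n) a b

/-- Extend a sequence on `Fin n` to `ℕ` by `0`. -/
noncomputable def extSeq (n : ℕ) (x : Fin n → ℕ) : ℕ → ℕ :=
  fun j => if h : j < n then x ⟨j, h⟩ else 0

/-- The least index at which `x` and `y` differ. -/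
noncomputable def diffIdx (n : ℕ) (x y : Fin n → ℕ) : ℕ :=
  sInf {j : ℕ | extSeq n x j ≠ extSeq n y j}

/-- The edge label `λ(x,y) = (j, x_j)`, `j` the least index where `x`,`y` differ. -/
noncomputable def lbl (n : ℕ) (x y : Fin n → ℕ) : ℕ × ℕ :=
  (diffIdx n x y, extSeq n x (diffIdx n x y))

/-- Strict order on labels: `(i,x) < (j,y)` iff `i < j`, or `i = j` and `x > y`. -/
def LblLT (p q : ℕ × ℕ) : Prop := p.1 < q.1 ∨ (p.1 = q.1 ∧ q.2 < p.2)

/-- Weak order on labels. -/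
def LblLE (p q : ℕ × ℕ) : Prop := p = q ∨ LblLT p q

/-- The sequence of edge labels of a chain. -/
noncomputable def labels (n : ℕ) (c : List (Fin n → ℕ)) : List (ℕ × ℕ) :=
  List.zipWith (lbl n) c c.tail

/-- A maximal chain in the interval `[a,b]`: a saturated chain of covers from `a` to `b`. -/
def IsMaxChn (m n : ℕ) (a b : Fin n → ℕ) (c : List (Fin n → ℕ)) : Prop :=
  c.Chain' (Covers m n) ∧ c.head? = some a ∧ c.getLast? = some b

/-- A chain is rising if its label sequence is strictly increasing. -/
noncomputable def Rising (n : ℕ) (c : List (Fin n → ℕ)) : Prop :=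
  (labels n c).Chain' LblLT

/-- A chain is falling if its label sequence is weakly decreasing. -/
noncomputable def Falling (n : ℕ) (c : List (Fin n → ℕ)) : Prop :=
  (labels n c).Chain' (fun p q => LblLE q p)

/-- Lexicographic comparison of label sequences. -/
def LexLE (l₁ l₂ : List (ℕ × ℕ)) : Prop := l₁ = l₂ ∨ List.Lex LblLT l₁ l₂

section TamariProof

variable {m n : ℕ}

lemma extSeq_of_lt {x : Fin n → ℕ} {j : ℕ} (h : j < n) : extSeq n x j = x ⟨j, h⟩ := by
  simp only [extSeq]; rw [dif_pos h]

lemma diffIdx_eq_of {x y : Fin n → ℕ} {p : ℕ}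
    (hd : extSeq n x p ≠ extSeq n y p)
    (hag : ∀ j, j < p → extSeq n x j = extSeq n y j) : diffIdx n x y = p := by
  refine le_antisymm (Nat.sInf_le hd) (le_csInf ⟨p, hd⟩ ?_)
  intro j hj
  by_contra hlt
  push_neg at hlt
  exact hj (hag j hlt)

lemma covers_facts {x y : Fin n → ℕ} (h : Covers m n x y) :
    ∃ (i : ℕ) (h1 : i + 1 < n) (k : Fin n),
      i + 1 ≤ k.val ∧
      x ⟨i, Nat.lt_of_succ_lt h1⟩ < x ⟨i + 1, h1⟩ ∧
      IsPrimEnd m n x ⟨i + 1, h1⟩ k ∧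
      (∀ j : Fin n, i + 1 ≤ j.val → j.val ≤ k.val → y j = x j - 1) ∧
      (∀ j : Fin n, j.val < i + 1 ∨ k.val < j.val → y j = x j) ∧
      diffIdx n x y = i + 1 := by
  obtain ⟨i, h1, k, hlt, hprim, hy⟩ := h
  have hk : i + 1 ≤ k.val := hprim.1
  have hin : ∀ j : Fin n, i + 1 ≤ j.val → j.val ≤ k.val → y j = x j - 1 := by
    intro j hj1 hj2
    simp only [hy]
    rw [if_pos ⟨hj1, hj2⟩]
  have hout : ∀ j : Fin n, j.val < i + 1 ∨ k.val < j.val → y j = x j := by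
    intro j hj
    simp only [hy]
    rw [if_neg]
    rintro ⟨a1, a2⟩
    have b1 : i + 1 ≤ j.val := a1
    have b2 : j.val ≤ k.val := a2
    omega
  have hx1 : 1 ≤ x ⟨i + 1, h1⟩ := lt_of_le_of_lt (Nat.zero_le _) hlt
  refine ⟨i, h1, k, hk, hlt, hprim, hin, hout, ?_⟩
  apply diffIdx_eq_of
  · rw [extSeq_of_lt h1, extSeq_of_lt h1]
    rw [hin ⟨i + 1, h1⟩ le_rfl hk]
    omega
  · intro j hj
    have hjn : j < n := by omega
    rw [extSeq_of_lt hjn, extSeq_of_lt hjn]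
    exact (hout ⟨j, hjn⟩ (Or.inl hj)).symm

lemma covers_dyck {x y : Fin n → ℕ} (hx : IsDyck m n x) (h : Covers m n x y) :
    IsDyck m n y := by
  obtain ⟨i, h1, k, hk, hlt, _, hin, hout, _⟩ := covers_facts h
  have hyle : ∀ j : Fin n, y j ≤ x j := by
    intro j
    by_cases hP : i + 1 ≤ j.val ∧ j.val ≤ k.val
    · rw [hin j hP.1 hP.2]; omega
    · rw [hout j (by omega)]
  constructor
  · intro j1 j2 hle
    have hle' : j1.val ≤ j2.val := hle
    by_cases hP2 : i + 1 ≤ j2.val ∧ j2.val ≤ k.val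
    · by_cases hP1 : i + 1 ≤ j1.val ∧ j1.val ≤ k.val
      · rw [hin j1 hP1.1 hP1.2, hin j2 hP2.1 hP2.2]
        exact Nat.sub_le_sub_right (hx.1 hle) 1
      · have hj1 : j1.val < i + 1 := by omega
        rw [hout j1 (Or.inl hj1), hin j2 hP2.1 hP2.2]
        have e1 : x j1 ≤ x ⟨i, Nat.lt_of_succ_lt h1⟩ := hx.1 (by
          show j1.val ≤ i; omega)
        have e2 : x ⟨i + 1, h1⟩ ≤ x j2 := hx.1 (by
          show i + 1 ≤ j2.val; exact hP2.1)
        omega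
    · rw [hout j2 (by omega)]
      exact le_trans (hyle j1) (hx.1 hle)
  · intro j
    exact le_trans (hyle j) (hx.2 j)

lemma covers_sum_lt {x y : Fin n → ℕ} (h : Covers m n x y) :
    (∑ j, y j) < ∑ j, x j := by
  obtain ⟨i, h1, k, hk, hlt, _, hin, hout, _⟩ := covers_facts h
  apply Finset.sum_lt_sum
  · intro j _
    by_cases hP : i + 1 ≤ j.val ∧ j.val ≤ k.val
    · rw [hin j hP.1 hP.2]; omega
    · rw [hout j (by omega)]
  · refine ⟨⟨i + 1, h1⟩, Finset.mem_univ _, ?_⟩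
    rw [hin ⟨i + 1, h1⟩ le_rfl hk]
    omega

lemma pos_lt_of_falling {x y z : Fin n → ℕ} (hxy : Covers m n x y) (hyz : Covers m n y z)
    (hf : LblLE (lbl n y z) (lbl n x y)) : diffIdx n y z < diffIdx n x y := by
  obtain ⟨i, h1, k, hk, hlt, _, hin, hout, hd⟩ := covers_facts hxy
  obtain ⟨i', h1', k', hk', hlt', _, hin', hout', hd'⟩ := covers_facts hyz
  rw [hd, hd']
  have hyv : y ⟨i + 1, h1⟩ = x ⟨i + 1, h1⟩ - 1 := hin ⟨i + 1, h1⟩ le_rfl hk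
  have hx1 : 1 ≤ x ⟨i + 1, h1⟩ := lt_of_le_of_lt (Nat.zero_le _) hlt
  rcases hf with heq | hlt2
  · exfalso
    have e1 : i' + 1 = i + 1 := by
      have := congrArg Prod.fst heq
      simpa [lbl, hd, hd'] using this
    have e2 : extSeq n y (diffIdx n y z) = extSeq n x (diffIdx n x y) := by
      have := congrArg Prod.snd heq
      simpa [lbl] using this
    rw [hd, hd', e1] at e2
    rw [extSeq_of_lt h1, extSeq_of_lt h1] at e2
    omega
  · rcases hlt2 with hfst | ⟨hfst, hsnd⟩
    · simpa [lbl, hd, hd'] using hfst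
    · exfalso
      have e1 : i' + 1 = i + 1 := by simpa [lbl, hd, hd'] using hfst
      simp only [lbl, hd, hd', e1] at hsnd
      rw [extSeq_of_lt h1, extSeq_of_lt h1] at hsnd
      omega

lemma chain_pos_lt (y : ℕ → Fin n → ℕ) (R : ℕ)
    (hcov : ∀ t, t < R → Covers m n (y t) (y (t + 1)))
    (hfall : ∀ t, t + 1 < R → LblLE (lbl n (y (t + 1)) (y (t + 2))) (lbl n (y t) (y (t + 1)))) :
    ∀ s t, s < t → t < R → diffIdx n (y t) (y (t + 1)) < diffIdx n (y s) (y (s + 1)) := by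
  intro s t
  induction t with
  | zero => omega
  | succ t ih =>
    intro hst htR
    have h1 : diffIdx n (y (t + 1)) (y (t + 2)) < diffIdx n (y t) (y (t + 1)) :=
      pos_lt_of_falling (hcov t (by omega)) (hcov (t + 1) htR) (hfall t htR)
    rcases Nat.lt_or_ge s t with hc | hc
    · exact lt_trans h1 (ih hc (by omega))
    · have : s = t := by omega
      subst this
      exact h1

lemma chain_agree (y : ℕ → Fin n → ℕ) (R : ℕ)
    (hcov : ∀ t, t < R → Covers m n (y t) (y (t + 1)))
    (j : Fin n) (hj : ∀ t, t < R → j.val < diffIdx n (y t) (y (t + 1))) :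
    ∀ t, t ≤ R → y t j = y 0 j := by
  intro t
  induction t with
  | zero => intro _; rfl
  | succ t ih =>
    intro ht
    obtain ⟨i, h1, k, hk, hlt, _, hin, hout, hd⟩ := covers_facts (hcov t (by omega))
    have hjp := hj t (by omega)
    rw [hd] at hjp
    rw [hout j (Or.inl hjp)]
    exact ih (by omega)

lemma chain_dyck (y : ℕ → Fin n → ℕ) (R : ℕ)
    (hcov : ∀ t, t < R → Covers m n (y t) (y (t + 1)))
    (h0 : IsDyck m n (y 0)) : ∀ t, t ≤ R → IsDyck m n (y t) := by
  intro t
  induction t with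
  | zero => intro _; exact h0
  | succ t ih =>
    intro ht
    exact covers_dyck (ih (by omega)) (hcov t (by omega))

lemma chain_sum_lt (y : ℕ → Fin n → ℕ) (R : ℕ)
    (hcov : ∀ t, t < R → Covers m n (y t) (y (t + 1))) (hR : 1 ≤ R) :
    (∑ j, y R j) < ∑ j, y 0 j := by
  induction R with
  | zero => omega
  | succ R ih =>
    have h := covers_sum_lt (hcov R (by omega))
    rcases Nat.eq_zero_or_pos R with hc | hc
    · subst hc; exact h
    · exact lt_trans h (ih (fun t ht => hcov t (by omega)) hc)

lemma chain_diffIdx (y : ℕ → Fin n → ℕ) (S : ℕ)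
    (hcov : ∀ t, t < S + 1 → Covers m n (y t) (y (t + 1)))
    (hfall : ∀ t, t + 1 < S + 1 →
      LblLE (lbl n (y (t + 1)) (y (t + 2))) (lbl n (y t) (y (t + 1)))) :
    diffIdx n (y 0) (y (S + 1)) = diffIdx n (y S) (y (S + 1)) := by
  obtain ⟨i, h1, k, hk, hlt, _, hin, hout, hd⟩ := covers_facts (hcov S (by omega))
  rw [hd]
  have hplt : ∀ t, t < S → i + 1 < diffIdx n (y t) (y (t + 1)) := by
    intro t ht
    have := chain_pos_lt y (S + 1) hcov hfall t S ht (by omega)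
    rw [hd] at this
    omega
  have hag : ∀ j : Fin n, j.val < i + 1 → y (S + 1) j = y 0 j := by
    intro j hjv
    apply chain_agree y (S + 1) hcov j _ (S + 1) le_rfl
    intro t ht
    rcases Nat.lt_or_ge t S with hc | hc
    · have := hplt t hc; omega
    · have : t = S := by omega
      subst this; rw [hd]; omega
  have hagS : y S ⟨i + 1, h1⟩ = y 0 ⟨i + 1, h1⟩ := by
    apply chain_agree y S (fun t ht => hcov t (by omega)) _ _ S le_rfl
    intro t ht
    exact hplt t ht
  have hx1 : 1 ≤ y S ⟨i + 1, h1⟩ := lt_of_le_of_lt (Nat.zero_le _) hlt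
  apply diffIdx_eq_of
  · rw [extSeq_of_lt h1, extSeq_of_lt h1]
    rw [hin ⟨i + 1, h1⟩ le_rfl hk, ← hagS]
    omega
  · intro j hj
    have hjn : j < n := by omega
    rw [extSeq_of_lt hjn, extSeq_of_lt hjn]
    exact (hag ⟨j, hjn⟩ hj).symm

lemma tamari_top_aux {x x' b : Fin n → ℕ} (hx : Monotone x) (hx' : Monotone x')
    (i : ℕ) (h1 : i + 1 < n) (k k' : Fin n)
    (hlt : 1 ≤ x ⟨i + 1, h1⟩)
    (hprim : IsPrimEnd m n x ⟨i + 1, h1⟩ k)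
    (hin : ∀ j : Fin n, i + 1 ≤ j.val → j.val ≤ k.val → b j = x j - 1)
    (hout : ∀ j : Fin n, j.val < i + 1 ∨ k.val < j.val → b j = x j)
    (hlt' : 1 ≤ x' ⟨i + 1, h1⟩)
    (hprim' : IsPrimEnd m n x' ⟨i + 1, h1⟩ k')
    (hin' : ∀ j : Fin n, i + 1 ≤ j.val → j.val ≤ k'.val → b j = x' j - 1)
    (hkk : k.val < k'.val) : False := by
  have hk : i + 1 ≤ k.val := hprim.1
  have hk' : i + 1 ≤ k'.val := hprim'.1
  have hn2 : k.val + 1 < n := lt_of_le_of_lt hkk k'.isLt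
  have hbd : m * (k.val + 1 - (i + 1)) ≤ x ⟨k.val + 1, hn2⟩ - x ⟨i + 1, h1⟩ := by
    rcases hprim.2.2 with hcase | ⟨hh, hcase⟩
    · omega
    · exact hcase
  have hint : x' ⟨k.val + 1, hn2⟩ - x' ⟨i + 1, h1⟩ < m * (k.val + 1 - (i + 1)) := by
    exact hprim'.2.1 ⟨k.val + 1, hn2⟩ (by show i + 1 < k.val + 1; omega)
      (by show k.val + 1 ≤ k'.val; omega)
  have hxk1' : x' ⟨i + 1, h1⟩ ≤ x' ⟨k.val + 1, hn2⟩ :=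
    hx' (by show (i + 1 : ℕ) ≤ k.val + 1; omega)
  have e1 : b ⟨k.val + 1, hn2⟩ = x ⟨k.val + 1, hn2⟩ :=
    hout ⟨k.val + 1, hn2⟩ (Or.inr (by show k.val < k.val + 1; omega))
  have e2 : b ⟨i + 1, h1⟩ = x ⟨i + 1, h1⟩ - 1 := hin ⟨i + 1, h1⟩ le_rfl hk
  have e3 : b ⟨k.val + 1, hn2⟩ = x' ⟨k.val + 1, hn2⟩ - 1 :=
    hin' ⟨k.val + 1, hn2⟩ (by show i + 1 ≤ k.val + 1; omega) (by show k.val + 1 ≤ k'.val; omega)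
  have e4 : b ⟨i + 1, h1⟩ = x' ⟨i + 1, h1⟩ - 1 := hin' ⟨i + 1, h1⟩ le_rfl hk'
  omega

lemma tamari_top_unique {x x' b : Fin n → ℕ} (hx : Monotone x) (hx' : Monotone x')
    (hc : Covers m n x b) (hc' : Covers m n x' b)
    (hd : diffIdx n x b = diffIdx n x' b) : x = x' := by
  obtain ⟨i, h1, k, hk, hlt, hprim, hin, hout, hdd⟩ := covers_facts hc
  obtain ⟨i', h1', k', hk', hlt', hprim', hin', hout', hdd'⟩ := covers_facts hc'
  have hii : i = i' := by omega
  subst hii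
  have hx1 : 1 ≤ x ⟨i + 1, h1⟩ := lt_of_le_of_lt (Nat.zero_le _) hlt
  have hx1' : 1 ≤ x' ⟨i + 1, h1'⟩ := lt_of_le_of_lt (Nat.zero_le _) hlt'
  have hpe : (⟨i + 1, h1⟩ : Fin n) = ⟨i + 1, h1'⟩ := rfl
  have hkke : k.val = k'.val := by
    rcases lt_trichotomy k.val k'.val with hcc | hcc | hcc
    · exact absurd hcc (fun hcc => tamari_top_aux hx hx' i h1 k k' hx1 hprim hin hout
        (hpe ▸ hx1') (hpe ▸ hprim') hin' hcc)
    · exact hcc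
    · exact absurd hcc (fun hcc => tamari_top_aux hx' hx i h1 k' k (hpe ▸ hx1') (hpe ▸ hprim')
        hin' hout' hx1 hprim hin hcc)
  funext j
  by_cases hP : i + 1 ≤ j.val ∧ j.val ≤ k.val
  · have v1 : b j = x j - 1 := hin j hP.1 hP.2
    have v2 : b j = x' j - 1 := hin' j hP.1 (by omega)
    have w1 : x ⟨i + 1, h1⟩ ≤ x j := hx (by exact hP.1)
    have w2 : x' ⟨i + 1, h1'⟩ ≤ x' j := hx' (by exact hP.1)
    omega
  · have v1 : b j = x j := hout j (by omega)
    have v2 : b j = x' j := hout' j (by omega)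
    omega

lemma tamari_core (a : Fin n → ℕ) (ha : IsDyck m n a) :
    ∀ R R' (y y' : ℕ → Fin n → ℕ),
      (∀ t, t < R → Covers m n (y t) (y (t + 1))) →
      (∀ t, t + 1 < R → LblLE (lbl n (y (t + 1)) (y (t + 2))) (lbl n (y t) (y (t + 1)))) →
      (∀ t, t < R' → Covers m n (y' t) (y' (t + 1))) →
      (∀ t, t + 1 < R' → LblLE (lbl n (y' (t + 1)) (y' (t + 2))) (lbl n (y' t) (y' (t + 1)))) →
      y 0 = a → y' 0 = a → y R = y' R' →
      R = R' ∧ ∀ t, t ≤ R → y t = y' t := by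
  intro R
  induction R with
  | zero =>
    intro R' y y' hcov hfall hcov' hfall' h0 h0' htop
    rcases Nat.eq_zero_or_pos R' with hc | hc
    · subst hc
      refine ⟨rfl, ?_⟩
      intro t ht
      have : t = 0 := by omega
      subst this
      rw [h0, h0']
    · exfalso
      have hsum := chain_sum_lt y' R' hcov' hc
      rw [← htop, h0, ← h0'] at hsum
      exact absurd hsum (lt_irrefl _)
  | succ R ih =>
    intro R' y y' hcov hfall hcov' hfall' h0 h0' htop
    rcases Nat.eq_zero_or_pos R' with hc | hc
    · exfalso
      subst hc
      have hsum := chain_sum_lt y (R + 1) hcov (by omega)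
      rw [htop, h0', ← h0] at hsum
      exact absurd hsum (lt_irrefl _)
    · obtain ⟨S, rfl⟩ : ∃ S, R' = S + 1 := ⟨R' - 1, by omega⟩
      have hdi : diffIdx n (y R) (y (R + 1)) = diffIdx n (y' S) (y' (S + 1)) := by
        have e1 := chain_diffIdx y R hcov hfall
        have e2 := chain_diffIdx y' S hcov' hfall'
        rw [← e1, ← e2, h0, h0', htop]
      have hdy : IsDyck m n (y R) :=
        chain_dyck y (R + 1) hcov (h0 ▸ ha) R (by omega)
      have hdy' : IsDyck m n (y' S) :=
        chain_dyck y' (S + 1) hcov' (h0' ▸ ha) S (by omega)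
      have hcS : Covers m n (y' S) (y (R + 1)) := by
        rw [htop]; exact hcov' S (by omega)
      have hxe : y R = y' S := by
        apply tamari_top_unique hdy.1 hdy'.1 (hcov R (by omega)) hcS
        rw [hdi, htop]
      obtain ⟨hRS, hall⟩ := ih S y y'
        (fun t ht => hcov t (by omega))
        (fun t ht => hfall t (by omega))
        (fun t ht => hcov' t (by omega))
        (fun t ht => hfall' t (by omega))
        h0 h0' hxe
      subst hRS
      refine ⟨rfl, ?_⟩
      intro t ht
      rcases Nat.lt_or_ge t (R + 1) with hcc | hcc
      · exact hall t (by omega)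
      · have : t = R + 1 := by omega
        subst this
        exact htop

end TamariProof

/-- With respect to the labeling `λ(a,b) = (j, a_j)`, every interval of `T_n^(m)`
contains at most one falling maximal chain. -/
theorem tamari_at_most_one_falling_chain (m n : ℕ) (hm : 0 < m) (hn : 0 < n)
    (a b : Fin n → ℕ) (ha : IsDyck m n a) (hb : IsDyck m n b)
    (hab : TamariLE m n a b)
    (c c' : List (Fin n → ℕ))
    (hc : IsMaxChn m n a b c) (hcf : Falling n c)
    (hc' : IsMaxChn m n a b c') (hcf' : Falling n c') :
    c = c' := by
  classical
  obtain ⟨hch, hhd, hlast⟩ := hc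
  obtain ⟨hch', hhd', hlast'⟩ := hc'
  have hne : c ≠ [] := by rintro rfl; simp at hhd
  have hne' : c' ≠ [] := by rintro rfl; simp at hhd'
  have hpos : 0 < c.length := List.length_pos_iff.mpr hne
  have hpos' : 0 < c'.length := List.length_pos_iff.mpr hne'
  set R := c.length - 1 with hR
  set R' := c'.length - 1 with hR'
  have hlen : c.length = R + 1 := by omega
  have hlen' : c'.length = R' + 1 := by omega
  set y : ℕ → (Fin n → ℕ) := fun t => c.getD t a with hy
  set y' : ℕ → (Fin n → ℕ) := fun t => c'.getD t a with hy'
  have hyget : ∀ (t : ℕ) (ht : t < c.length), y t = (c)[t] := by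
    intro t ht; simp only [hy]; exact List.getD_eq_getElem c a ht
  have hyget' : ∀ (t : ℕ) (ht : t < c'.length), y' t = (c')[t] := by
    intro t ht; simp only [hy']; exact List.getD_eq_getElem c' a ht
  -- head and last
  have h0 : y 0 = a := by
    rw [hyget 0 hpos]
    have := List.head?_eq_head hne
    rw [this] at hhd
    have hh := Option.some.inj hhd
    rw [← hh, List.head_eq_getElem]
  have h0' : y' 0 = a := by
    rw [hyget' 0 hpos']
    have := List.head?_eq_head hne'
    rw [this] at hhd'
    have hh := Option.some.inj hhd'
    rw [← hh, List.head_eq_getElem]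
  have hRb : y R = b := by
    rw [hyget R (by omega)]
    rw [List.getLast?_eq_getLast hne] at hlast
    have hh := Option.some.inj hlast
    rw [← hh, List.getLast_eq_getElem]
  have hRb' : y' R' = b := by
    rw [hyget' R' (by omega)]
    rw [List.getLast?_eq_getLast hne'] at hlast'
    have hh := Option.some.inj hlast'
    rw [← hh, List.getLast_eq_getElem]
  -- covers
  have hcov : ∀ t, t < R → Covers m n (y t) (y (t + 1)) := by
    intro t ht
    have h2 := List.isChain_iff_getElem.mp hch t (by omega)
    rw [hyget t (by omega), hyget (t + 1) (by omega)]
    exact h2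
  have hcov' : ∀ t, t < R' → Covers m n (y' t) (y' (t + 1)) := by
    intro t ht
    have h2 := List.isChain_iff_getElem.mp hch' t (by omega)
    rw [hyget' t (by omega), hyget' (t + 1) (by omega)]
    exact h2
  -- labels
  have hlablen : (labels n c).length = R := by
    simp [labels, List.length_zipWith, List.length_tail]; omega
  have hlablen' : (labels n c').length = R' := by
    simp [labels, List.length_zipWith, List.length_tail]; omega
  have hlabget : ∀ (t : ℕ) (ht : t < R), (labels n c)[t]'(by omega) = lbl n (y t) (y (t + 1)) := by
    intro t ht
    simp only [labels]
    rw [List.getElem_zipWith, List.getElem_tail]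
    rw [hyget t (by omega), hyget (t + 1) (by omega)]
  have hlabget' : ∀ (t : ℕ) (ht : t < R'), (labels n c')[t]'(by omega) = lbl n (y' t) (y' (t + 1)) := by
    intro t ht
    simp only [labels]
    rw [List.getElem_zipWith, List.getElem_tail]
    rw [hyget' t (by omega), hyget' (t + 1) (by omega)]
  have hfall : ∀ t, t + 1 < R → LblLE (lbl n (y (t + 1)) (y (t + 2))) (lbl n (y t) (y (t + 1))) := by
    intro t ht
    have h2 := List.isChain_iff_getElem.mp hcf t (by omega)
    rw [hlabget t (by omega), hlabget (t + 1) (by omega)] at h2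
    exact h2
  have hfall' : ∀ t, t + 1 < R' → LblLE (lbl n (y' (t + 1)) (y' (t + 2))) (lbl n (y' t) (y' (t + 1))) := by
    intro t ht
    have h2 := List.isChain_iff_getElem.mp hcf' t (by omega)
    rw [hlabget' t (by omega), hlabget' (t + 1) (by omega)] at h2
    exact h2
  obtain ⟨hRR, hall⟩ := tamari_core a ha R R' y y' hcov hfall hcov' hfall' h0 h0'
    (by rw [hRb, hRb'])
  apply List.ext_getElem (by omega)
  intro t h1 h2
  have := hall t (by omega)
  rw [hyget t h1, hyget' t h2] at this
  exact this
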